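/- For π ∈ ℂ \ {0}, set P(λ) = (1+|π|²)^{-1} [[λ^{-1}|π|² + λ, π(λ^{-2} − 1)],[conj(π)(1 − λ²), λ|π|² + λ^{-1}]]. Then: (1) P(λ) ∈ SU(2) for all λ on the unit circle; (2) P(1) = I; (3) i·(dP/dλ)(1) = (i/(1+|π|²)) [[1−|π|², −2π],[−2conj(π), |π|²−1]], and under the identification of su(2) with ℝ³ (x ↔ (−i/2)[[−x₃, x₁+ix₂],[x₁−ix₂, x₃]]) this matrix corresponds to the vector 2σ^{-1}(π), where σ: S² → ℂ ∪ {∞} is stereographic projection from the south pole. -/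

import Mathlib

open Matrix

/-- Identification of `ℝ³` with `su(2)`:
`x ↔ (−i/2)[[−x₃, x₁+ix₂],[x₁−ix₂, x₃]]`. -/
noncomputable def toSu2 (x : Fin 3 → ℝ) : Matrix (Fin 2) (Fin 2) ℂ :=
  (-Complex.I / 2) •
    !![-(x 2 : ℂ), (x 0 : ℂ) + (x 1 : ℂ) * Complex.I;
       (x 0 : ℂ) - (x 1 : ℂ) * Complex.I, (x 2 : ℂ)]

/-- The matrix `P(λ)` (principal solution along an edge). -/
noncomputable def Pmat (π l : ℂ) : Matrix (Fin 2) (Fin 2) ℂ :=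
  ((1 : ℂ) + (‖π‖ : ℂ) ^ 2)⁻¹ •
    !![l⁻¹ * (‖π‖ : ℂ) ^ 2 + l, π * ((l⁻¹) ^ 2 - 1);
       starRingEnd ℂ π * (1 - l ^ 2), l * (‖π‖ : ℂ) ^ 2 + l⁻¹]

set_option maxHeartbeats 2000000 in
/-- `P(λ) ∈ SU(2)` on the unit circle, `P(1) = I`, and
`i·P'(1)` is the `su(2)` matrix corresponding to the vector `2σ⁻¹(π)`,
where `σ⁻¹(π) = (1+|π|²)⁻¹(2Re π, 2Im π, 1−|π|²)` is the inverse stereographic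
projection from the south pole. -/
theorem Pmat_properties (π : ℂ) (hπ : π ≠ 0) :
    (∀ l : ℂ, ‖l‖ = 1 → Pmat π l * (Pmat π l)ᴴ = 1 ∧ (Pmat π l).det = 1) ∧
    Pmat π 1 = 1 ∧
    Matrix.of (fun i j => deriv (fun l => Pmat π l i j) 1)
      = ((1 : ℂ) + (‖π‖ : ℂ) ^ 2)⁻¹ •
        !![1 - (‖π‖ : ℂ) ^ 2, -2 * π;
           -2 * starRingEnd ℂ π, (‖π‖ : ℂ) ^ 2 - 1] ∧
    Complex.I • (((1 : ℂ) + (‖π‖ : ℂ) ^ 2)⁻¹ •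
        !![1 - (‖π‖ : ℂ) ^ 2, -2 * π;
           -2 * starRingEnd ℂ π, (‖π‖ : ℂ) ^ 2 - 1])
      = toSu2 (fun k =>
          2 * ((1 + ‖π‖ ^ 2)⁻¹ * ![2 * π.re, 2 * π.im, 1 - ‖π‖ ^ 2] k)) := by
  have hn : ((1 : ℂ) + (‖π‖ : ℂ) ^ 2) ≠ 0 := by
    have h1 : ((1 : ℂ) + (‖π‖ : ℂ) ^ 2) = ((1 + ‖π‖ ^ 2 : ℝ) : ℂ) := by push_cast; ring
    rw [h1, Complex.ofReal_ne_zero]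
    positivity
  have hn2 : ((1 : ℂ) + ((‖π‖ : ℝ) : ℂ) ^ 2) ≠ 0 := hn
  have hpp : π * starRingEnd ℂ π = (‖π‖ : ℂ) ^ 2 := Complex.mul_conj' π
  refine ⟨?_, ?_, ?_, ?_⟩
  · -- SU(2) on the unit circle
    intro l hl
    have hl0 : l ≠ 0 := by intro h; simp [h] at hl
    have hlc : starRingEnd ℂ l = l⁻¹ := by
      have : l * starRingEnd ℂ l = 1 := by rw [Complex.mul_conj' l, hl]; norm_num
      field_simp
      linear_combination this
    have hlc' : star l = l⁻¹ := hlc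
    have hn' : π * starRingEnd ℂ π + 1 ≠ 0 := by
      intro h; apply hn; rw [← hpp]; linear_combination h
    have hpa : π * starRingEnd ℂ π = ((‖π‖ : ℝ) : ℂ) ^ 2 := by
      rw [hpp]
    have hD2 : π * starRingEnd ℂ π * l ^ 2 * 2 + π ^ 2 * starRingEnd ℂ π ^ 2 * l ^ 2 + l ^ 2 ≠ 0 := by
      have : π * starRingEnd ℂ π * l ^ 2 * 2 + π ^ 2 * starRingEnd ℂ π ^ 2 * l ^ 2 + l ^ 2
          = l ^ 2 * (π * starRingEnd ℂ π + 1) ^ 2 := by ring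
      rw [this]
      exact mul_ne_zero (pow_ne_zero 2 hl0) (pow_ne_zero 2 hn')
    have hD4 : π * starRingEnd ℂ π * l ^ 4 * 2 + π ^ 2 * starRingEnd ℂ π ^ 2 * l ^ 4 + l ^ 4 ≠ 0 := by
      have : π * starRingEnd ℂ π * l ^ 4 * 2 + π ^ 2 * starRingEnd ℂ π ^ 2 * l ^ 4 + l ^ 4
          = l ^ 4 * (π * starRingEnd ℂ π + 1) ^ 2 := by ring
      rw [this]
      exact mul_ne_zero (pow_ne_zero 4 hl0) (pow_ne_zero 2 hn')
    constructor
    · ext i j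
      fin_cases i <;> fin_cases j <;>
        simp [Pmat, mul_apply, Fin.sum_univ_two, conjTranspose_apply, Matrix.one_apply,
          hlc, hlc', Complex.conj_ofReal, inv_inv] <;>
        ((try simp only [← hpa]); (try simp only [← hpp]); field_simp [hn', (by rwa [add_comm] at hn' : 1 + π * starRingEnd ℂ π ≠ 0)];
          first
            | ring1
            | linear_combination mul_inv_cancel₀ hD2
            | linear_combination mul_inv_cancel₀ hD4)
    · simp only [Pmat, det_smul, det_fin_two_of, Fin.prod_const, smul_eq_mul]
      simp only [← hpp, Fintype.card_fin]
      field_simp [hn', (by rwa [add_comm] at hn' : 1 + π * starRingEnd ℂ π ≠ 0)]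
      first
        | ring1
        | linear_combination mul_inv_cancel₀ hD2
        | linear_combination mul_inv_cancel₀ hD4
  · -- P(1) = I
    ext i j
    fin_cases i <;> fin_cases j <;>
      simp [Pmat, Matrix.one_apply] <;>
      field_simp [hn2] <;> (try ring1)
  · -- derivative at 1
    have hinv : HasDerivAt (fun l : ℂ => l⁻¹) (-1) 1 := by
      simpa using hasDerivAt_inv (one_ne_zero : (1:ℂ) ≠ 0)
    set k : ℂ := ((1 : ℂ) + (‖π‖ : ℂ) ^ 2)⁻¹ with hk
    set r : ℂ := (‖π‖ : ℂ) ^ 2 with hr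
    have h00 : HasDerivAt (fun l : ℂ => Pmat π l 0 0) (k * (1 - r)) 1 := by
      have hst := ((hinv.mul_const r).add (hasDerivAt_id 1)).const_mul k
      convert hst using 2 <;>
        first | ring1 | rfl | (simp [Pmat, hk, hr] <;> ring1) | (simp only [id_eq]; push_cast; ring1)
    have h01 : HasDerivAt (fun l : ℂ => Pmat π l 0 1) (k * (-2 * π)) 1 := by
      have hst := (((hinv.pow 2).sub_const 1).const_mul π).const_mul k
      convert hst using 2 <;>
        first | ring1 | rfl | (simp [Pmat, hk, hr] <;> ring1) | (simp only [id_eq]; push_cast; ring1)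
    have h10 : HasDerivAt (fun l : ℂ => Pmat π l 1 0) (k * (-2 * starRingEnd ℂ π)) 1 := by
      have hst := ((((hasDerivAt_id (1:ℂ)).pow 2).const_sub 1).const_mul (starRingEnd ℂ π)).const_mul k
      convert hst using 2 <;>
        first | ring1 | rfl | (simp [Pmat, hk, hr] <;> ring1) | (simp only [id_eq]; push_cast; ring1)
    have h11 : HasDerivAt (fun l : ℂ => Pmat π l 1 1) (k * (r - 1)) 1 := by
      have hst := (((hasDerivAt_id (1:ℂ)).mul_const r).add hinv).const_mul k
      convert hst using 2 <;>
        first | ring1 | rfl | (simp [Pmat, hk, hr] <;> ring1) | (simp only [id_eq]; push_cast; ring1)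
    ext i j
    fin_cases i <;> fin_cases j
    · simpa using h00.deriv
    · simpa using h01.deriv
    · simpa using h10.deriv
    · simpa using h11.deriv
  · -- identification with 2σ⁻¹(π)
    have hre : (π.re : ℂ) + (π.im : ℂ) * Complex.I = π := Complex.re_add_im π
    have hconj : (π.re : ℂ) - (π.im : ℂ) * Complex.I = starRingEnd ℂ π := by
      rw [← Complex.re_add_im π]
      simp [Complex.ext_iff]
    ext i j
    fin_cases i <;> fin_cases j <;>
      simp [toSu2] <;> push_cast <;>
      first
        | ring1
        | linear_combination (Complex.I * ((1:ℂ) + (‖π‖:ℂ)^2)⁻¹ * 2) * hre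
        | linear_combination (Complex.I * ((1:ℂ) + (‖π‖:ℂ)^2)⁻¹ * 2) * hconj
        | linear_combination (-(Complex.I * ((1:ℂ) + (‖π‖:ℂ)^2)⁻¹ * 2)) * hre
        | linear_combination (-(Complex.I * ((1:ℂ) + (‖π‖:ℂ)^2)⁻¹ * 2)) * hconj
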